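/- arXiv:2506.17727 — 5 statements merged into one kernel-verified Lean document; each statement's English description precedes it below -/
import Mathlib

section
/- Let K be a number field and U a torsion-free subgroup of the unit group (𝓞 K)ˣ. Form the semidirect product G = 𝓞 K ⋊ U, where the normal factor is the additive group of 𝓞 K and an element u ∈ U acts on 𝓞 K by multiplication by u. Then the map Hom(G, U) → Hom(U, U), sending a group homomorphism G → U to its restriction along the canonical inclusion U ↪ G, is a bijection. -/
open NumberField SemidirectProduct

/-- The action of a subgroup `U ≤ (𝓞 K)ˣ` on the additive group of `𝓞 K`
(written multiplicatively), where `u ∈ U` acts by multiplication by `u`. -/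
noncomputable def otAction (K : Type*) [Field K] [NumberField K] (U : Subgroup (𝓞 K)ˣ) :
    U →* MulAut (Multiplicative (𝓞 K)) where
  toFun u := AddEquiv.toMultiplicative (AddAut.mulLeft (u : (𝓞 K)ˣ))
  map_one' := by ext x; simp <;> rfl
  map_mul' u v := by ext x; simp [mul_assoc] <;> rfl

theorem key (K : Type*) [Field K] [NumberField K] (U : Subgroup (𝓞 K)ˣ)
    (hU : ∀ g : U, g ≠ 1 → ¬IsOfFinOrder g)
    (f : (Multiplicative (𝓞 K) ⋊[otAction K U] U) →* U) (x : 𝓞 K) :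
    f (inl (Multiplicative.ofAdd x)) = 1 := by
  by_cases hex : ∃ u : U, u ≠ 1
  · obtain ⟨u, hu⟩ := hex
    set a : 𝓞 K := ((u : (𝓞 K)ˣ) : 𝓞 K) - 1 with ha_def
    have ha : a ≠ 0 := by
      simp only [ha_def, sub_ne_zero]
      intro h
      exact hu (Subtype.ext (Units.ext (by simpa using h)))
    -- Step 1: f kills multiples of a
    have step1 : ∀ y : 𝓞 K, f (inl (Multiplicative.ofAdd (a * y))) = 1 := by
      intro y
      have hc : (inl (Multiplicative.ofAdd (((u : (𝓞 K)ˣ) : 𝓞 K) * y)) :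
          Multiplicative (𝓞 K) ⋊[otAction K U] U) =
          inr u * inl (Multiplicative.ofAdd y) * inr u⁻¹ := by
        have := inl_aut (φ := otAction K U) u (Multiplicative.ofAdd y)
        convert this using 2
        rfl
      have heq : f (inl (Multiplicative.ofAdd (((u : (𝓞 K)ˣ) : 𝓞 K) * y))) =
          f (inl (Multiplicative.ofAdd y)) := by
        rw [hc, map_mul, map_mul, map_inv, mul_comm (f (inr u)), mul_assoc]
        simp
      have : a * y = ((u : (𝓞 K)ˣ) : 𝓞 K) * y - y := by ring
      rw [this]
      rw [ofAdd_sub, map_div, map_div, heq, div_self']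
    -- Step 2: use finiteness of quotient
    set I : Ideal (𝓞 K) := Ideal.span {a} with hI
    have hIbot : I ≠ ⊥ := by
      simp [hI, Ideal.span_singleton_eq_bot, ha]
    set N : ℕ := Ideal.absNorm I with hN
    have hNpos : 0 < N := Nat.pos_of_ne_zero (by
      simp [hN, Ideal.absNorm_eq_zero_iff, hIbot])
    have hmem : ((N : 𝓞 K) * x) ∈ I := I.mul_mem_right x (Ideal.absNorm_mem I)
    obtain ⟨y, hy⟩ := Ideal.mem_span_singleton'.mp (hI ▸ hmem)
    have hpow : f (inl (Multiplicative.ofAdd x)) ^ N = 1 := by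
      have : (inl (Multiplicative.ofAdd x) :
          Multiplicative (𝓞 K) ⋊[otAction K U] U) ^ N =
          inl (Multiplicative.ofAdd ((N : 𝓞 K) * x)) := by
        rw [← map_pow, ← ofAdd_nsmul]
        norm_num [nsmul_eq_mul]
      rw [← map_pow, this, ← hy, mul_comm y a, step1]
    by_contra hne
    exact hU _ hne (isOfFinOrder_iff_pow_eq_one.mpr ⟨N, hNpos, hpow⟩)
  · push_neg at hex
    exact hex _

/-- For a number field `K` and a torsion-free subgroup
`U ≤ (𝓞 K)ˣ`, restriction along the canonical inclusion `U ↪ 𝓞 K ⋊ U` gives a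
bijection `Hom(𝓞 K ⋊ U, U) → Hom(U, U)`. -/
theorem stmt0 (K : Type*) [Field K] [NumberField K] (U : Subgroup (𝓞 K)ˣ)
    (hU : ∀ g : U, g ≠ 1 → ¬IsOfFinOrder g) :
    Function.Bijective
      (fun f : (Multiplicative (𝓞 K) ⋊[otAction K U] U) →* U =>
        f.comp (SemidirectProduct.inr : U →* Multiplicative (𝓞 K) ⋊[otAction K U] U)) := by
  constructor
  · intro f₁ f₂ h
    apply SemidirectProduct.hom_ext
    · exact MonoidHom.ext fun x =>
        (key K U hU f₁ x.toAdd).trans (key K U hU f₂ x.toAdd).symm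
    · exact h
  · intro g
    refine ⟨g.comp rightHom, ?_⟩
    ext u
    simp
end

section
/- Let K be a number field having exactly two non-real embeddings into ℂ (i.e. exactly two ring homomorphisms σ : K → ℂ with conj ∘ σ ≠ σ, necessarily a conjugate pair). Then every ring automorphism ρ of K satisfies ρ ∘ ρ = id. -/
/-- If a number field `K` has exactly two non-real
embeddings into `ℂ`, then every ring automorphism `ρ` of `K` satisfies
`ρ ∘ ρ = id`. -/
theorem stmt10 (K : Type*) [Field K] [NumberField K]
    (h : Nat.card {σ : K →+* ℂ // (starRingEnd ℂ).comp σ ≠ σ} = 2)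
    (ρ : K ≃+* K) :
    ρ.trans ρ = RingEquiv.refl K := by
  -- the subtype of non-real embeddings
  set S := {σ : K →+* ℂ // (starRingEnd ℂ).comp σ ≠ σ} with hS
  obtain ⟨a, b, hab, huniv⟩ := Nat.card_eq_two_iff.mp h
  have hmem : ∀ c : S, c = a ∨ c = b := by
    intro c
    have : c ∈ ({a, b} : Set S) := huniv ▸ Set.mem_univ c
    simpa using this
  -- pick a non-real embedding σ (namely a)
  obtain ⟨σ, hσ⟩ := a
  -- conj ∘ σ is also non-real
  have hconj : (starRingEnd ℂ).comp ((starRingEnd ℂ).comp σ) = σ := by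
    ext x; simp
  have hconjne : (starRingEnd ℂ).comp ((starRingEnd ℂ).comp σ) ≠ (starRingEnd ℂ).comp σ := by
    rw [hconj]; exact fun hh => hσ hh.symm
  -- σ ∘ ρ is non-real
  have hρne : (starRingEnd ℂ).comp (σ.comp (ρ : K →+* K)) ≠ σ.comp (ρ : K →+* K) := by
    intro hh
    apply hσ
    ext x
    obtain ⟨y, rfl⟩ := ρ.surjective x
    exact RingHom.congr_fun hh y
  set t : S := ⟨(starRingEnd ℂ).comp σ, hconjne⟩ with ht
  set u : S := ⟨σ.comp (ρ : K →+* K), hρne⟩ with hu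
  set s : S := ⟨σ, hσ⟩ with hs
  have hst : s ≠ t := by
    intro hh
    exact hσ (congrArg Subtype.val hh).symm
  -- u equals s or t
  have hkey : u = s ∨ u = t := by
    rcases hmem u with h1 | h1
    · exact Or.inl h1
    · rcases hmem t with h2 | h2
      · exact absurd h2.symm hst
      · exact Or.inr (h1.trans h2.symm)
  rcases hkey with hk | hk
  · -- σ ∘ ρ = σ, so ρ = id
    have hcomp : σ.comp (ρ : K →+* K) = σ := congrArg Subtype.val hk
    ext x
    have h1 : σ (ρ x) = σ x := RingHom.congr_fun hcomp x
    have hρx : ρ x = x := σ.injective h1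
    simp [hρx]
  · -- σ ∘ ρ = conj ∘ σ
    have hcomp : σ.comp (ρ : K →+* K) = (starRingEnd ℂ).comp σ :=
      congrArg Subtype.val hk
    ext x
    have h1 : ∀ y, σ (ρ y) = starRingEnd ℂ (σ y) := fun y => RingHom.congr_fun hcomp y
    have h2 : σ (ρ (ρ x)) = σ x := by
      rw [h1 (ρ x), h1 x]
      simp
    simpa using σ.injective h2
end

section
/- Let K be a number field of odd degree over ℚ having exactly two non-real embeddings into ℂ (i.e. exactly two ring homomorphisms σ : K → ℂ with conj ∘ σ ≠ σ). Then the automorphism group of K is trivial: every ring automorphism of K is the identity. -/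
/-- A number field of odd degree over `ℚ` with exactly two
non-real embeddings into `ℂ` has trivial automorphism group. -/
theorem stmt11 (K : Type*) [Field K] [NumberField K]
    (hodd : Odd (Module.finrank ℚ K))
    (h : Nat.card {σ : K →+* ℂ // (starRingEnd ℂ).comp σ ≠ σ} = 2)
    (ρ : K ≃+* K) :
    ρ = RingEquiv.refl K := by
  classical
  by_contra hne
  -- the action of ρ on the set of non-real embeddings
  set S := {σ : K →+* ℂ // (starRingEnd ℂ).comp σ ≠ σ} with hS
  have hcomp : ∀ σ : S, (starRingEnd ℂ).comp ((σ : K →+* ℂ).comp (ρ : K →+* K)) ≠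
      (σ : K →+* ℂ).comp (ρ : K →+* K) := by
    rintro ⟨σ, hσ⟩ hc
    apply hσ
    ext x
    have := RingHom.congr_fun hc (ρ.symm x)
    simpa using this
  let g : S → S := fun σ => ⟨(σ : K →+* ℂ).comp (ρ : K →+* K), hcomp σ⟩
  have hginj : Function.Injective g := by
    rintro ⟨σ, hσ⟩ ⟨τ, hτ⟩ hst
    have : σ.comp (ρ : K →+* K) = τ.comp (ρ : K →+* K) := congrArg Subtype.val hst
    ext x
    simpa using RingHom.congr_fun this (ρ.symm x)
  -- in a 2-element set every injective map is an involution
  have hinv : ∀ σ : S, g (g σ) = σ := by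
    intro σ
    by_cases hgs : g σ = σ
    · rw [hgs, hgs]
    · by_contra hggs
      obtain ⟨x, y, hxy, hxyuniv⟩ := Nat.card_eq_two_iff.mp h
      have hmem : ∀ z : S, z = x ∨ z = y := by
        intro z
        have : z ∈ ({x, y} : Set S) := hxyuniv ▸ Set.mem_univ z
        simpa using this
      have h1 : g (g σ) ≠ g σ := fun hc => hgs (hginj hc)
      rcases hmem σ with rfl | rfl <;> rcases hmem (g σ) with h2 | h2 <;>
        rcases hmem (g (g σ)) with h3 | h3 <;>
        simp_all
  -- hence ρ ∘ ρ = id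
  have hρρ : ∀ x : K, ρ (ρ x) = x := by
    have : 0 < Nat.card S := by omega
    have : Nonempty S := Nat.card_pos_iff.mp this |>.1
    obtain ⟨σ⟩ := this
    intro x
    have := congrArg Subtype.val (hinv σ)
    have hx := RingHom.congr_fun this x
    exact (σ : K →+* ℂ).injective (by simpa [g] using hx)
  -- now consider the involution on all embeddings
  let f : Function.End (K →+* ℂ) := fun σ => σ.comp (ρ : K →+* K)
  have hf : f ^ 2 ^ 1 = 1 := by
    have h2 : f ^ 2 ^ 1 = f * f := by norm_num [pow_succ, pow_one]
    rw [h2]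
    funext σ
    show (σ.comp (ρ : K →+* K)).comp (ρ : K →+* K) = σ
    ext x
    show σ (ρ (ρ x)) = σ x
    rw [hρρ]
  have hfix : f.fixedPoints = ∅ := by
    ext σ
    simp only [Set.mem_empty_iff_false, iff_false, Function.IsFixedPt,
      Function.fixedPoints, Set.mem_setOf_eq]
    intro hc
    apply hne
    ext x
    have := RingHom.congr_fun hc x
    exact σ.injective (by simpa [f] using this)
  have := Equiv.Perm.card_fixedPoints_modEq (p := 2) (n := 1) hf
  rw [NumberField.Embeddings.card K ℂ] at this
  have h0 : Fintype.card f.fixedPoints = 0 := by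
    simp [hfix]
  rw [h0] at this
  have : (2 : ℕ) ∣ Module.finrank ℚ K := (Nat.modEq_zero_iff_dvd).mp this
  exact ((Nat.not_even_iff_odd.mpr hodd)) ((even_iff_two_dvd).mpr this)
end

section
/- Let K be a number field with s real embeddings and t pairs of conjugate non-real embeddings, and let E⁺ ≤ (𝓞 K)ˣ be the subgroup of totally positive units, i.e. units u with σ(u) > 0 for every ring homomorphism σ : K → ℝ. Consider the map log : E⁺ → ℝ^{s+t} indexed by the infinite places w of K, sending u to the vector whose w-coordinate is log w(u) for real places w and log(w(u)²) for complex places w (equivalently, mult(w)·log w(u), where w(u) denotes the absolute value attached to the place w and mult(w) is 1 for real and 2 for complex places). Then the image log(E⁺) is contained in the hyperplane H = { x ∈ ℝ^{s+t} : Σ_w x_w = 0 }, is a discrete subgroup of ℝ^{s+t}, and its ℝ-linear span is all of H; that is, log(E⁺) is a full lattice in H (of rank s + t − 1). -/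
open NumberField NumberField.Units NumberField.InfinitePlace
open NumberField.Units.dirichletUnitTheorem

theorem sumAll (K : Type*) [Field K] [NumberField K] (x : (𝓞 K)ˣ) :
    ∑ w : InfinitePlace K, (w.mult : ℝ) * Real.log (w (algebraMap (𝓞 K) K ↑x)) = 0 := by
  have h := congr_arg Real.log (prod_eq_abs_norm (K := K) (algebraMap (𝓞 K) K ↑x))
  rw [show algebraMap (𝓞 K) K ↑x = (x : K) from rfl, Units.norm, Rat.cast_one, Real.log_one,
    Real.log_prod] at h
  · simp_rw [Real.log_pow] at h
    rw [← h]
  · exact fun w _ => pow_ne_zero _ (AbsoluteValue.ne_zero _ (coe_ne_zero x))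

theorem extHyp (K : Type*) [Field K] [NumberField K] (x y : InfinitePlace K → ℝ)
    (h0 : ∑ w, x w = ∑ w, y w)
    (h : ∀ w : InfinitePlace K, w ≠ w₀ → x w = y w) : x = y := by
  classical
  funext w
  by_cases hw : w = w₀
  · subst hw
    have hx : x w₀ + ∑ v ∈ Finset.univ.erase w₀, x v = ∑ v, x v :=
      Finset.add_sum_erase _ _ (Finset.mem_univ _)
    have hy : y w₀ + ∑ v ∈ Finset.univ.erase w₀, y v = ∑ v, y v :=
      Finset.add_sum_erase _ _ (Finset.mem_univ _)
    have he : ∑ v ∈ Finset.univ.erase w₀, x v = ∑ v ∈ Finset.univ.erase w₀, y v :=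
      Finset.sum_congr rfl fun v hv => h v (Finset.ne_of_mem_erase hv)
    have := hx.trans (h0.trans hy.symm)
    rw [he] at this
    linarith
  · exact h w hw

/-- **Dirichlet's unit theorem for totally positive units.**
Let `K` be a number field and `E⁺ ≤ (𝓞 K)ˣ` the subgroup of totally positive
units. The logarithmic map `E⁺ → ℝ^{s+t}` (indexed by the infinite places `w`
of `K`, with `w`-coordinate `mult w · log w(u)`) has image contained in the
hyperplane `H = {x | ∑ w, x w = 0}`, this image is a discrete subset, and its
`ℝ`-linear span is all of `H`; i.e. `log(E⁺)` is a full lattice in `H`. -/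
theorem stmt13 (K : Type*) [Field K] [NumberField K]
    (Eplus : Subgroup (𝓞 K)ˣ)
    (hE : ∀ u : (𝓞 K)ˣ,
      u ∈ Eplus ↔ ∀ σ : K →+* ℝ, 0 < σ (algebraMap (𝓞 K) K ↑u))
    (f : Eplus → (InfinitePlace K → ℝ))
    (hf : ∀ (u : Eplus) (w : InfinitePlace K),
      f u w = (w.mult : ℝ) * Real.log (w (algebraMap (𝓞 K) K ↑(u : (𝓞 K)ˣ)))) :
    (∀ u : Eplus, ∑ w : InfinitePlace K, f u w = 0) ∧
      DiscreteTopology (Set.range f) ∧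
      (Submodule.span ℝ (Set.range f) : Set (InfinitePlace K → ℝ)) =
        {x : InfinitePlace K → ℝ | ∑ w : InfinitePlace K, x w = 0} := by
  classical
  have hsum : ∀ u : Eplus, ∑ w : InfinitePlace K, f u w = 0 := by
    intro u
    simp_rw [hf]
    exact sumAll K _
  -- squares of units are totally positive
  have hsq : ∀ u : (𝓞 K)ˣ, u ^ 2 ∈ Eplus := by
    intro u
    rw [hE]
    intro σ
    have h0 : algebraMap (𝓞 K) K ↑u ≠ 0 := coe_ne_zero u
    have hσ : σ (algebraMap (𝓞 K) K ↑u) ≠ 0 :=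
      fun h => h0 (σ.injective (h.trans (map_zero σ).symm))
    have hcast : algebraMap (𝓞 K) K ↑(u ^ 2 : (𝓞 K)ˣ) = (algebraMap (𝓞 K) K ↑u) ^ 2 := by
      push_cast; ring
    rw [hcast, map_pow]
    exact lt_of_le_of_ne (sq_nonneg _) (Ne.symm (pow_ne_zero 2 hσ))
  -- the projection map
  set π : (InfinitePlace K → ℝ) →ₗ[ℝ] ({w : InfinitePlace K // w ≠ w₀} → ℝ) :=
    LinearMap.funLeft ℝ ℝ Subtype.val with hπ
  have hπf : ∀ u : Eplus, π (f u) = logEmbedding K (Additive.ofMul (u : (𝓞 K)ˣ)) := by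
    intro u
    funext w
    rw [logEmbedding_component]
    exact hf u w.1
  -- π of f of squares
  have hfsq : ∀ u : (𝓞 K)ˣ, π (f ⟨u ^ 2, hsq u⟩) =
      (2 : ℝ) • logEmbedding K (Additive.ofMul u) := by
    intro u
    rw [hπf]
    funext w
    rw [Pi.smul_apply, logEmbedding_component, logEmbedding_component, smul_eq_mul]
    have : ((u ^ 2 : (𝓞 K)ˣ) : K) = ((u : K)) ^ 2 := by push_cast; ring
    rw [this, map_pow, Real.log_pow]
    push_cast
    ring
  -- span of the projected image is everything
  have hspan : Submodule.span ℝ (π '' Set.range f) = ⊤ := by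
    refine eq_top_iff.mpr ?_
    rw [← unitLattice_span_eq_top K]
    refine Submodule.span_le.mpr fun y hy => ?_
    obtain ⟨v, -, rfl⟩ := hy
    have h2 : ((logEmbedding K).toIntLinearMap v : {w : InfinitePlace K // w ≠ w₀} → ℝ)
        = (2 : ℝ)⁻¹ • π (f ⟨v.toMul ^ 2, hsq v.toMul⟩) := by
      rw [hfsq, smul_smul, inv_mul_cancel₀ (two_ne_zero), one_smul]
      rfl
    rw [h2]
    exact Submodule.smul_mem _ _ (Submodule.subset_span ⟨f _, Set.mem_range_self _, rfl⟩)
  -- the sum functional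
  set Lsum : (InfinitePlace K → ℝ) →ₗ[ℝ] ℝ := ∑ w, LinearMap.proj w with hLs
  have hLsum : ∀ x : InfinitePlace K → ℝ, Lsum x = ∑ w, x w := fun x => by
    simp [hLs]
  have hle : Submodule.span ℝ (Set.range f) ≤ LinearMap.ker Lsum := by
    refine Submodule.span_le.mpr fun y hy => ?_
    obtain ⟨u, rfl⟩ := hy
    rw [SetLike.mem_coe, LinearMap.mem_ker, hLsum]
    exact hsum u
  refine ⟨hsum, ?_, ?_⟩
  · -- discreteness
    set e : (InfinitePlace K → ℝ) →ₗ[ℝ] (({w : InfinitePlace K // w ≠ w₀} → ℝ) × ℝ) :=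
      π.prod Lsum with he
    have hinj : Function.Injective e := by
      intro x y hxy
      have h1 : π x = π y := congrArg Prod.fst hxy
      have h2 : Lsum x = Lsum y := congrArg Prod.snd hxy
      refine extHyp K x y ?_ fun w hw => congrFun h1 ⟨w, hw⟩
      rw [← hLsum, ← hLsum, h2]
    have hrank : Module.finrank ℝ (InfinitePlace K → ℝ) =
        Module.finrank ℝ (({w : InfinitePlace K // w ≠ w₀} → ℝ) × ℝ) := by
      simp only [Module.finrank_fintype_fun_eq_card, Module.finrank_prod,
        Module.finrank_self, Fintype.card_subtype_compl, Fintype.card_ofSubsingleton,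
        Fintype.card_subtype_eq]
      have := Fintype.card_pos (α := InfinitePlace K)
      omega
    have hbij : Function.Bijective e :=
      ⟨hinj, (LinearMap.injective_iff_surjective_of_finrank_eq_finrank hrank).mp hinj⟩
    let eL := LinearEquiv.ofBijective e hbij
    let F := eL.toContinuousLinearEquiv.toHomeomorph
    have hTdisc : DiscreteTopology
        ↥((unitLattice K : Set ({w : InfinitePlace K // w ≠ w₀} → ℝ)) ×ˢ ({0} : Set ℝ)) := by
      haveI h1 : DiscreteTopology (unitLattice K : Set ({w : InfinitePlace K // w ≠ w₀} → ℝ)) :=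
        instDiscrete_unitLattice K
      exact (Homeomorph.Set.prod _ _).isEmbedding.discreteTopology
    have hsub : F '' Set.range f ⊆
        (unitLattice K : Set ({w : InfinitePlace K // w ≠ w₀} → ℝ)) ×ˢ ({0} : Set ℝ) := by
      rintro z ⟨x, ⟨u, rfl⟩, rfl⟩
      refine ⟨?_, ?_⟩
      · show π (f u) ∈ _
        rw [hπf]
        exact ⟨Additive.ofMul (u : (𝓞 K)ˣ), trivial, rfl⟩
      · show Lsum (f u) ∈ _
        rw [hLsum]
        exact hsum u
    have hD : DiscreteTopology ↥(F '' Set.range f) := DiscreteTopology.of_subset hTdisc hsub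
    exact (F.image (Set.range f)).isEmbedding.discreteTopology
  · -- span = hyperplane
    ext x
    simp only [SetLike.mem_coe, Set.mem_setOf_eq]
    constructor
    · intro hx
      rw [← hLsum]
      exact hle hx
    · intro hx
      have : π x ∈ Submodule.map π (Submodule.span ℝ (Set.range f)) := by
        rw [Submodule.map_span, hspan]
        trivial
      obtain ⟨y, hy, hyx⟩ := this
      have hxy : x = y := by
        refine extHyp K x y ?_ fun w hw => (congrFun hyx ⟨w, hw⟩).symm
        rw [hx, ← hLsum y]
        exact (LinearMap.mem_ker.mp (hle hy)).symm
      rw [hxy]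
      exact hy
end

section
/- Let α = √(1 + √2) ∈ ℝ and let K = ℚ(α) be the subfield of ℝ generated by α over ℚ (a quartic number field, abstractly ℚ[X]/(X⁴ − 2X² − 1)). Then there exists a ring automorphism ρ of K with ρ(α) = −α; this ρ is not the identity, and for every non-real embedding σ : K → ℂ (i.e. every ring homomorphism σ : K → ℂ with conj ∘ σ ≠ σ) one has σ ∘ ρ = conj ∘ σ, where conj denotes complex conjugation on ℂ. -/
open IntermediateField Polynomial

noncomputable section

namespace Stmt15Aux

lemma hs2 : Real.sqrt 2 ^ 2 = 2 := Real.sq_sqrt (by norm_num)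

lemma ha2 : Real.sqrt (1 + Real.sqrt 2) ^ 2 = 1 + Real.sqrt 2 :=
  Real.sq_sqrt (by positivity)

lemma apos : 0 < Real.sqrt (1 + Real.sqrt 2) :=
  Real.sqrt_pos.mpr (by positivity)

/-- No real number with `x² = 1 + √2` satisfies a rational monic quadratic. -/
lemma no_quad {x : ℝ} (hx : x ^ 2 = 1 + Real.sqrt 2) (b c : ℚ)
    (h : x ^ 2 + (b : ℝ) * x + (c : ℝ) = 0) : False := by
  have h2 := hs2
  have irr := irrational_sqrt_two
  by_cases hb : b = 0
  · subst hb
    norm_num at h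
    exact irr ⟨-(1 + c), by push_cast; linarith [hx, h]⟩
  · have hbx : (b : ℝ) * x = -(1 + (c : ℝ)) - Real.sqrt 2 := by nlinarith [hx, h]
    have hsq : ((b : ℝ) * x) ^ 2 = ((1 + (c : ℝ)) + Real.sqrt 2) ^ 2 := by
      rw [hbx]; ring
    have hx' : (b : ℝ) ^ 2 * x ^ 2 = (b : ℝ) ^ 2 * (1 + Real.sqrt 2) := by rw [hx]
    have key : ((1 + (c : ℝ)) ^ 2 + 2 - (b : ℝ) ^ 2)
        + (2 * (1 + (c : ℝ)) - (b : ℝ) ^ 2) * Real.sqrt 2 = 0 := by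
      linear_combination hx' - hsq - h2
    by_cases ht : 2 * (1 + c) - b ^ 2 = 0
    · have ht' : (2 * (1 + (c : ℝ)) - (b : ℝ) ^ 2) = 0 := by exact_mod_cast ht
      have hr : ((1 + (c : ℝ)) ^ 2 + 2 - (b : ℝ) ^ 2) = 0 := by
        rw [ht'] at key; linarith
      have hrq : (1 + c) ^ 2 + 2 - b ^ 2 = 0 := by exact_mod_cast hr
      nlinarith [sq_nonneg c, ht, hrq]
    · refine irr ⟨-((1 + c) ^ 2 + 2 - b ^ 2) / (2 * (1 + c) - b ^ 2), ?_⟩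
      have ht' : (2 * (1 + (c : ℝ)) - (b : ℝ) ^ 2) ≠ 0 := by
        exact_mod_cast ht
      push_cast
      field_simp
      rw [← neg_div, div_eq_iff (by intro h0; apply ht'; linarith)]
      linear_combination -key

/-- The minimal polynomial of such `x` has degree at least 3. -/
lemma deg3 {x : ℝ} (hx : x ^ 2 = 1 + Real.sqrt 2) (hint : IsIntegral ℚ x) :
    3 ≤ (minpoly ℚ x).natDegree := by
  by_contra hlt
  push_neg at hlt
  set q := minpoly ℚ x with hq
  have h1 : 0 < q.natDegree := minpoly.natDegree_pos hint
  have hev : aeval x q = 0 := minpoly.aeval ℚ x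
  have hmon : q.Monic := minpoly.monic hint
  have hsum : aeval x q = ∑ i ∈ Finset.range 3, q.coeff i • x ^ i :=
    aeval_eq_sum_range' (by omega) x
  rw [hev] at hsum
  simp only [Finset.sum_range_succ, Finset.sum_range_zero, zero_add] at hsum
  have hsmul : ∀ (r : ℚ) (y : ℝ), r • y = (r : ℝ) * y := fun r y => Rat.smul_def r y
  rw [hsmul, hsmul, hsmul] at hsum
  interval_cases hdeg : q.natDegree
  · -- degree 1
    have hc1 : q.coeff 1 = 1 := by
      have := hmon.coeff_natDegree; rwa [hdeg] at this
    have hc2 : q.coeff 2 = 0 := coeff_eq_zero_of_natDegree_lt (by omega)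
    rw [hc1, hc2] at hsum
    push_cast at hsum
    have hx0 : x = -(q.coeff 0 : ℝ) := by linarith
    have hxx : x ^ 2 = (q.coeff 0 : ℝ) ^ 2 := by rw [hx0]; ring
    exact no_quad hx 0 (-(q.coeff 0 ^ 2)) (by push_cast; linarith [hxx])
  · -- degree 2
    have hc2 : q.coeff 2 = 1 := by
      have := hmon.coeff_natDegree; rwa [hdeg] at this
    rw [hc2] at hsum
    push_cast at hsum
    exact no_quad hx (q.coeff 1) (q.coeff 0) (by linarith)

def P : ℚ[X] := X ^ 4 - 2 * X ^ 2 - 1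

lemma hPm : P.Monic := by
  unfold P
  monicity!

lemma hPd : P.natDegree = 4 := by
  unfold P
  compute_degree!

lemma haevP {x : ℝ} (hx : x ^ 2 = 1 + Real.sqrt 2) : aeval x P = 0 := by
  simp only [P, map_sub, map_pow, map_mul, map_ofNat, aeval_X, map_one]
  nlinarith [hx, hs2]

lemma hint_of (x : ℝ) (hx : x ^ 2 = 1 + Real.sqrt 2) : IsIntegral ℚ x :=
  ⟨P, hPm, by rw [← aeval_def]; exact haevP hx⟩

/-- key: `-x` is a root of the minimal polynomial of `x`. -/
lemma root_neg {x : ℝ} (hx : x ^ 2 = 1 + Real.sqrt 2) :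
    aeval (-x) (minpoly ℚ x) = 0 := by
  have hx' : (-x) ^ 2 = 1 + Real.sqrt 2 := by rw [neg_pow]; simpa using hx
  have hint : IsIntegral ℚ x := hint_of x hx
  have hint' : IsIntegral ℚ (-x) := hint_of (-x) hx'
  have hq : minpoly ℚ x ∣ P := minpoly.dvd ℚ x (haevP hx)
  have hq' : minpoly ℚ (-x) ∣ P := minpoly.dvd ℚ (-x) (haevP hx')
  have hirr : Irreducible (minpoly ℚ x) := minpoly.irreducible hint
  have hirr' : Irreducible (minpoly ℚ (-x)) := minpoly.irreducible hint'
  by_cases heq : minpoly ℚ x = minpoly ℚ (-x)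
  · rw [heq]; exact minpoly.aeval ℚ (-x)
  · exfalso
    have hnd : ¬ minpoly ℚ x ∣ minpoly ℚ (-x) := fun hd =>
      heq (eq_of_monic_of_associated (minpoly.monic hint) (minpoly.monic hint')
        (hirr.associated_of_dvd hirr' hd))
    have hcop : IsCoprime (minpoly ℚ x) (minpoly ℚ (-x)) :=
      hirr.coprime_iff_not_dvd.mpr hnd
    have hmul : minpoly ℚ x * minpoly ℚ (-x) ∣ P := hcop.mul_dvd hq hq'
    have hle := natDegree_le_of_dvd hmul hPm.ne_zero
    rw [natDegree_mul (minpoly.ne_zero hint) (minpoly.ne_zero hint'), hPd] at hle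
    have d1 := deg3 hx hint
    have d2 := deg3 hx' hint'
    omega

/-- Two ring homs out of a power-基 field agreeing on the generator are equal. -/
lemma ringHom_ext {K : Type*} [Field K] [Algebra ℚ K] (pb : PowerBasis ℚ K)
    (f g : K →+* ℂ) (h : f pb.gen = g pb.gen) : f = g := by
  have h2 : f.toRatAlgHom = g.toRatAlgHom := pb.algHom_ext h
  exact RingHom.ext fun x => DFunLike.congr_fun h2 x

end Stmt15Aux

end

open Stmt15Aux
/-- Let `α = √(1 + √2)` and `K = ℚ(α) ⊆ ℝ`. There is a ring
automorphism `ρ` of `K` with `ρ(α) = -α`; it is not the identity, and for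
every non-real embedding `σ : K → ℂ` one has `σ ∘ ρ = conj ∘ σ`. -/
theorem stmt15 :
    ∃ ρ : (ℚ⟮Real.sqrt (1 + Real.sqrt 2)⟯ : IntermediateField ℚ ℝ) ≃+*
          (ℚ⟮Real.sqrt (1 + Real.sqrt 2)⟯ : IntermediateField ℚ ℝ),
      ρ ⟨Real.sqrt (1 + Real.sqrt 2),
          IntermediateField.mem_adjoin_simple_self ℚ (Real.sqrt (1 + Real.sqrt 2))⟩ =
        -⟨Real.sqrt (1 + Real.sqrt 2),
          IntermediateField.mem_adjoin_simple_self ℚ (Real.sqrt (1 + Real.sqrt 2))⟩ ∧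
      ρ ≠ RingEquiv.refl _ ∧
      ∀ σ : (ℚ⟮Real.sqrt (1 + Real.sqrt 2)⟯ : IntermediateField ℚ ℝ) →+* ℂ,
        (starRingEnd ℂ).comp σ ≠ σ →
          σ.comp (ρ : (ℚ⟮Real.sqrt (1 + Real.sqrt 2)⟯ : IntermediateField ℚ ℝ) →+*
            (ℚ⟮Real.sqrt (1 + Real.sqrt 2)⟯ : IntermediateField ℚ ℝ)) =
            (starRingEnd ℂ).comp σ := by
  set α : ℝ := Real.sqrt (1 + Real.sqrt 2) with hα
  have hx : α ^ 2 = 1 + Real.sqrt 2 := ha2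
  have hint : IsIntegral ℚ α := hint_of α hx
  set K : IntermediateField ℚ ℝ := ℚ⟮α⟯ with hK
  let pb : PowerBasis ℚ K := IntermediateField.adjoin.powerBasis hint
  have hgen : (pb.gen : ℝ) = α := by
    rw [IntermediateField.adjoin.powerBasis_gen, IntermediateField.AdjoinSimple.coe_gen]
  have hroot : aeval (-pb.gen) (minpoly ℚ pb.gen) = 0 := by
    have hm : minpoly ℚ pb.gen = minpoly ℚ α := by
      rw [IntermediateField.adjoin.powerBasis_gen]; exact IntermediateField.minpoly_gen ℚ α
    rw [hm]
    apply Subtype.ext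
    have := Polynomial.aeval_algebraMap_apply ℝ (-pb.gen) (minpoly ℚ α)
    rw [map_neg] at this
    have hmap : algebraMap K ℝ pb.gen = α := hgen
    rw [hmap] at this
    calc ((aeval (-pb.gen) (minpoly ℚ α) : K) : ℝ)
        = algebraMap K ℝ (aeval (-pb.gen) (minpoly ℚ α)) := rfl
      _ = aeval (-α) (minpoly ℚ α) := this.symm
      _ = 0 := root_neg hx
  let φ : K →ₐ[ℚ] K := pb.lift (-pb.gen) hroot
  have halg : Algebra.IsAlgebraic ℚ K := IntermediateField.isAlgebraic_adjoin_simple hint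
  have hnz : Module.IsTorsionFree ℚ (K : IntermediateField ℚ ℝ) :=
    inferInstance
  have hbij : Function.Bijective φ := Algebra.IsAlgebraic.algHom_bijective φ
  let ρ₀ : K ≃ₐ[ℚ] K := AlgEquiv.ofBijective φ hbij
  have hρapp : ∀ y : K, ρ₀.toRingEquiv y = φ y := fun y => rfl
  have hgen_eq : pb.gen = (⟨α, IntermediateField.mem_adjoin_simple_self ℚ α⟩ : K) :=
    Subtype.ext hgen
  have hρgen : ρ₀.toRingEquiv pb.gen = -pb.gen := by
    rw [hρapp]; exact pb.lift_gen (-pb.gen) hroot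
  refine ⟨ρ₀.toRingEquiv, ?_, ?_, ?_⟩
  · rw [← hgen_eq]; exact hρgen
  · intro hcontra
    have h1 : ρ₀.toRingEquiv pb.gen = pb.gen := by rw [hcontra]; rfl
    rw [hρgen] at h1
    have h2 : (-(pb.gen) : K).val = pb.gen.val := congrArg Subtype.val h1
    have h3 : -(pb.gen : ℝ) = (pb.gen : ℝ) := h2
    rw [hgen] at h3
    have := apos
    rw [← hα] at this
    linarith
  · intro σ hσ
    set z : ℂ := σ pb.gen with hz
    -- the quartic relation in K and for z
    have hKrel : pb.gen ^ 4 = pb.gen ^ 2 + pb.gen ^ 2 + 1 := by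
      apply Subtype.ext
      push_cast [hgen]
      nlinarith [hx, hs2]
    have hzrel : z ^ 4 = z ^ 2 + z ^ 2 + 1 := by
      have := congrArg σ hKrel
      simpa [map_pow, map_add, map_one] using this
    have ht : ((Real.sqrt 2 : ℝ) : ℂ) ^ 2 = 2 := by
      rw [← Complex.ofReal_pow, hs2]; norm_num
    have hfac : (z ^ 2 - 1 - ((Real.sqrt 2 : ℝ) : ℂ)) * (z ^ 2 - 1 + ((Real.sqrt 2 : ℝ) : ℂ)) = 0 := by
      linear_combination hzrel - ht
    have him2 : (z ^ 2).im = 0 := by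
      rcases mul_eq_zero.mp hfac with h | h
      · have hzz : z ^ 2 = 1 + ((Real.sqrt 2 : ℝ) : ℂ) := by linear_combination h
        rw [hzz]; simp
      · have hzz : z ^ 2 = 1 - ((Real.sqrt 2 : ℝ) : ℂ) := by linear_combination h
        rw [hzz]; simp
    have hprod : z.re * z.im = 0 := by
      have : (z ^ 2).im = 2 * (z.re * z.im) := by
        simp [pow_two, Complex.mul_im]; ring
      linarith [him2, this]
    have him : z.im ≠ 0 := by
      intro h0
      apply hσ
      apply ringHom_ext pb
      show (starRingEnd ℂ) (σ pb.gen) = σ pb.gen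
      exact Complex.conj_eq_iff_im.mpr h0
    have hre : z.re = 0 := by
      rcases mul_eq_zero.mp hprod with h | h
      · exact h
      · exact absurd h him
    have hconj : (starRingEnd ℂ) z = -z := by
      apply Complex.ext <;> simp [hre]
    apply ringHom_ext pb
    show σ (ρ₀.toRingEquiv pb.gen) = (starRingEnd ℂ) (σ pb.gen)
    rw [hρgen, map_neg, hconj]
end
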